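/- Let x, y, T > 0 be fixed real numbers. The function g : (0, ∞) → ℝ defined by g(s) = 4s/((x + y) + √((x + y)² - 8xy·sinh(sT)·e^{-sT})) is strictly increasing. -/
import Mathlib


/-- For fixed `x, y, T > 0` the function
`s ↦ 4s / ((x+y) + √((x+y)² - 8xy sinh(sT) e^{-sT}))` is strictly increasing on `(0, ∞)`. -/
theorem stmt13 (x y T : ℝ) (hx : 0 < x) (hy : 0 < y) (hT : 0 < T) :
    StrictMonoOn
      (fun s : ℝ => 4 * s / ((x + y) +
        Real.sqrt ((x + y) ^ 2 - 8 * x * y * Real.sinh (s * T) * Real.exp (-(s * T)))))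
      (Set.Ioi 0) := by
  have key : ∀ u : ℝ, Real.sinh u * Real.exp (-u) = (1 - Real.exp (-(2*u))) / 2 := by
    intro u
    have h1 : Real.exp u * Real.exp (-u) = 1 := by
      rw [← Real.exp_add]; simp
    have h2 : Real.exp (-u) * Real.exp (-u) = Real.exp (-(2*u)) := by
      rw [← Real.exp_add]; ring_nf
    rw [Real.sinh_eq]
    nlinarith [h1, h2]
  intro a ha b hb hab
  simp only [Set.mem_Ioi] at ha hb
  set Da := (x + y) + Real.sqrt ((x + y) ^ 2 - 8 * x * y * Real.sinh (a * T) * Real.exp (-(a * T))) with hDa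
  set Db := (x + y) + Real.sqrt ((x + y) ^ 2 - 8 * x * y * Real.sinh (b * T) * Real.exp (-(b * T))) with hDb
  have hDbpos : 0 < Db := by
    have := Real.sqrt_nonneg ((x + y) ^ 2 - 8 * x * y * Real.sinh (b * T) * Real.exp (-(b * T)))
    positivity
  have hmono : Db ≤ Da := by
    have hle : Real.sinh (a * T) * Real.exp (-(a * T)) ≤ Real.sinh (b * T) * Real.exp (-(b * T)) := by
      rw [key, key]
      have : Real.exp (-(2 * (b * T))) ≤ Real.exp (-(2 * (a * T))) := by
        apply Real.exp_le_exp.2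
        nlinarith [hab.le]
      linarith
    have : (x + y) ^ 2 - 8 * x * y * Real.sinh (b * T) * Real.exp (-(b * T)) ≤
        (x + y) ^ 2 - 8 * x * y * Real.sinh (a * T) * Real.exp (-(a * T)) := by
      have h8 := mul_le_mul_of_nonneg_left hle (by positivity : (0:ℝ) ≤ 8*x*y)
      nlinarith [h8]
    have := Real.sqrt_le_sqrt this
    linarith
  show 4 * a / Da < 4 * b / Db
  calc 4 * a / Da ≤ 4 * a / Db := by
        apply div_le_div_of_nonneg_left (by linarith) hDbpos hmono
    _ < 4 * b / Db := by
        exact (div_lt_div_iff_of_pos_right hDbpos).mpr (by linarith)
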